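/- arXiv:2310.17716 — 3 statements merged into one kernel-verified Lean document; each statement's English description precedes it below -/
import Mathlib

section
/- Let V be a normed vector space over ℝ or ℂ with dual space V*, dual norm ‖·‖* and induced distance d*(x,y) = (1/2)‖x−y‖*. Let ε, τ > 0 and let z, x ∈ V* with d*(x,z) ≥ ε + τ/2. Then for any probability measure μ on V*, Pr_{y∼μ}[d*(x,y) < ε] ≤ sup_{v : ‖v‖≤1} Pr_{y∼μ}[|y(v) − z(v)| > τ]. -/
open MeasureTheory

/-- A continuous linear functional on a finite-dimensional space attains its norm
on the closed unit ball. -/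
lemma exists_norm_le_one_and_opNorm_le_norm_apply {𝕜 V : Type*} [RCLike 𝕜]
    [NormedAddCommGroup V] [NormedSpace 𝕜 V] [FiniteDimensional 𝕜 V]
    (f : StrongDual 𝕜 V) : ∃ v : V, ‖v‖ ≤ 1 ∧ ‖f‖ ≤ ‖f v‖ := by
  haveI : ProperSpace V := FiniteDimensional.proper 𝕜 V
  have hcomp : IsCompact (Metric.closedBall (0 : V) 1) := isCompact_closedBall _ _
  have hne : (Metric.closedBall (0 : V) 1).Nonempty :=
    ⟨0, Metric.mem_closedBall_self zero_le_one⟩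
  obtain ⟨v0, hv0, hmax⟩ := hcomp.exists_isMaxOn hne
    (continuous_norm.comp f.continuous).continuousOn
  have hv0' : ‖v0‖ ≤ 1 := by simpa [Metric.mem_closedBall] using hv0
  refine ⟨v0, hv0', ?_⟩
  apply ContinuousLinearMap.opNorm_le_bound' f (norm_nonneg _)
  intro w hw
  have hwpos : (0 : ℝ) < ‖w‖ := lt_of_le_of_ne (norm_nonneg w) (Ne.symm hw)
  have hcw : ((‖w‖⁻¹ : ℝ) : 𝕜) • w ∈ Metric.closedBall (0 : V) 1 := by
    simp only [Metric.mem_closedBall, dist_zero_right, norm_smul]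
    rw [RCLike.norm_ofReal]
    rw [abs_of_nonneg (by positivity)]
    rw [inv_mul_cancel₀ hwpos.ne']
  have hmx := hmax hcw
  have hval : ‖f (((‖w‖⁻¹ : ℝ) : 𝕜) • w)‖ = ‖w‖⁻¹ * ‖f w‖ := by
    rw [_root_.map_smul, norm_smul, RCLike.norm_ofReal,
      abs_of_nonneg (inv_nonneg.2 hwpos.le)]
  simp only [Set.mem_setOf_eq, Function.comp_apply, hval] at hmx
  calc ‖f w‖ = ‖w‖ * (‖w‖⁻¹ * ‖f w‖) := by field_simp
    _ ≤ ‖w‖ * ‖f v0‖ := mul_le_mul_of_nonneg_left hmx hwpos.le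
    _ = ‖f v0‖ * ‖w‖ := mul_comm _ _

/-- "Far from a fixed functional": if `d*(x,z) ≥ ε + τ/2` (with `d*(a,b) = (1/2)‖a-b‖`
the distance induced by the dual norm) then the `μ`-mass of the `ε`-ball around `x`
is at most the maximally distinguishable fraction from `z` with tolerance `τ`. -/
theorem far_from_fixed_functional {𝕜 V : Type*} [RCLike 𝕜] [NormedAddCommGroup V]
    [NormedSpace 𝕜 V] [FiniteDimensional 𝕜 V]
    [MeasurableSpace (StrongDual 𝕜 V)]
    (μ : Measure (StrongDual 𝕜 V)) [IsProbabilityMeasure μ]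
    (ε τ : ℝ) (hε : 0 < ε) (hτ : 0 < τ)
    (x z : StrongDual 𝕜 V)
    (hfar : ε + τ / 2 ≤ (1 / 2) * ‖x - z‖) :
    (μ {y | (1 / 2) * ‖x - y‖ < ε}).toReal ≤
      ⨆ v ∈ Metric.closedBall (0 : V) 1, (μ {y | τ < ‖y v - z v‖}).toReal := by
  obtain ⟨v, hv1, hv2⟩ := exists_norm_le_one_and_opNorm_le_norm_apply (x - z)
  have hsub : {y : StrongDual 𝕜 V | (1 / 2) * ‖x - y‖ < ε} ⊆
      {y | τ < ‖y v - z v‖} := by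
    intro y hy
    simp only [Set.mem_setOf_eq] at hy ⊢
    have h1 : ‖x - y‖ < 2 * ε := by linarith
    have h2 : 2 * ε + τ ≤ ‖x - z‖ := by linarith
    have h3 : ‖(x - y) v‖ ≤ ‖x - y‖ :=
      le_trans ((x - y).le_opNorm v) (by nlinarith [norm_nonneg (x - y)])
    have h4 : ‖(x - z) v‖ ≤ ‖(x - y) v‖ + ‖y v - z v‖ := by
      have : (x - z) v = (x - y) v + (y v - z v) := by
        simp only [ContinuousLinearMap.sub_apply]; ring
      rw [this]; exact norm_add_le _ _
    have h5 : ‖x - z‖ ≤ ‖(x - z) v‖ := hv2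
    linarith
  have hmono : (μ {y | (1 / 2) * ‖x - y‖ < ε}).toReal ≤
      (μ {y | τ < ‖y v - z v‖}).toReal :=
    ENNReal.toReal_mono (measure_ne_top μ _) (measure_mono hsub)
  refine hmono.trans ?_
  have hvmem : v ∈ Metric.closedBall (0 : V) 1 := by
    simpa [Metric.mem_closedBall] using hv1
  have hbdd : BddAbove (Set.range fun w : V =>
      ⨆ _ : w ∈ Metric.closedBall (0 : V) 1, (μ {y | τ < ‖y w - z w‖}).toReal) := by
    refine ⟨1, ?_⟩
    rintro _ ⟨w, rfl⟩
    refine Real.iSup_le (fun _ => ?_) zero_le_one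
    exact ENNReal.toReal_le_of_le_ofReal zero_le_one (by simpa using prob_le_one)
  have hstep : (μ {y | τ < ‖y v - z v‖}).toReal =
      ⨆ _ : v ∈ Metric.closedBall (0 : V) 1, (μ {y | τ < ‖y v - z v‖}).toReal :=
    (ciSup_pos (f := fun _ => (μ {y | τ < ‖y v - z v‖}).toReal) hvmem).symm
  exact hstep.le.trans (le_ciSup hbdd v)
end

section
/- Let V be a normed vector space with dual V* and d*(x,y) = (1/2)‖x−y‖*. Let ε, τ > 0, z ∈ V* and μ a probability measure on V*. Then for every x ∈ V*: Pr_{y∼μ}[d*(x,y) < ε] ≤ max{ sup_{‖v‖≤1} Pr_{y∼μ}[|y(v)−z(v)| > τ], Pr_{y∼μ}[d*(y,z) < 2ε + τ/2] }. -/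
open MeasureTheory

/-- In a finite-dimensional space, the operator norm of a functional is attained
on the closed unit ball. -/
lemma exists_unitBall_opNorm_le {𝕜 V : Type*} [RCLike 𝕜] [NormedAddCommGroup V]
    [NormedSpace 𝕜 V] [FiniteDimensional 𝕜 V] (f : V →L[𝕜] 𝕜) :
    ∃ v : V, ‖v‖ ≤ 1 ∧ ‖f‖ ≤ ‖f v‖ := by
  haveI : ProperSpace V := FiniteDimensional.proper 𝕜 V
  obtain ⟨v₀, hv₀mem, hmax⟩ :=
    (isCompact_closedBall (0 : V) 1).exists_isMaxOn ⟨0, Metric.mem_closedBall_self zero_le_one⟩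
      (Continuous.continuousOn (by continuity : Continuous fun v : V => ‖f v‖))
  refine ⟨v₀, by simpa using hv₀mem, ?_⟩
  refine f.opNorm_le_bound (norm_nonneg _) fun v => ?_
  rcases eq_or_ne v 0 with rfl | hv
  · simp
  · have hvn : (0 : ℝ) < ‖v‖ := norm_pos_iff.mpr hv
    have hu : ‖(‖v‖⁻¹ : 𝕜) • v‖ = 1 := by
      rw [norm_smul]
      simp [abs_of_pos hvn, inv_mul_cancel₀ hvn.ne']
    have humem : (‖v‖⁻¹ : 𝕜) • v ∈ Metric.closedBall (0 : V) 1 := by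
      simp [hu]
    have h1 : ‖f ((‖v‖⁻¹ : 𝕜) • v)‖ ≤ ‖f v₀‖ := hmax humem
    have h2 : ‖f ((‖v‖⁻¹ : 𝕜) • v)‖ = ‖v‖⁻¹ * ‖f v‖ := by
      rw [_root_.map_smul, norm_smul]
      simp [abs_of_pos hvn]
    rw [h2] at h1
    calc ‖f v‖ = ‖v‖ * (‖v‖⁻¹ * ‖f v‖) := by field_simp
    _ ≤ ‖v‖ * ‖f v₀‖ := by
        exact mul_le_mul_of_nonneg_left h1 hvn.le
    _ = ‖f v₀‖ * ‖v‖ := mul_comm _ _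

/-- The mass of any `ε`-ball (w.r.t. the induced dual distance `d*(a,b) = (1/2)‖a-b‖`)
is bounded by the maximum of the maximally distinguishable fraction from `z` and the
mass of the `(2ε + τ/2)`-ball around `z`. -/
theorem ball_mass_le_max {𝕜 V : Type*} [RCLike 𝕜] [NormedAddCommGroup V]
    [NormedSpace 𝕜 V] [FiniteDimensional 𝕜 V]
    [MeasurableSpace (StrongDual 𝕜 V)]
    (μ : Measure (StrongDual 𝕜 V)) [IsProbabilityMeasure μ]
    (ε τ : ℝ) (hε : 0 < ε) (hτ : 0 < τ)
    (z : StrongDual 𝕜 V) :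
    ∀ x : StrongDual 𝕜 V,
      (μ {y | (1 / 2) * ‖x - y‖ < ε}).toReal ≤
        max (⨆ v ∈ Metric.closedBall (0 : V) 1, (μ {y | τ < ‖y v - z v‖}).toReal)
          ((μ {y | (1 / 2) * ‖y - z‖ < 2 * ε + τ / 2}).toReal) := by
  intro x
  by_cases hxz : (1 / 2) * ‖x - z‖ < ε + τ / 2
  · refine le_max_of_le_right ?_
    refine ENNReal.toReal_mono (measure_ne_top μ _) (measure_mono fun y hy => ?_)
    simp only [Set.mem_setOf_eq] at hy ⊢
    have h1 : ‖y - z‖ ≤ ‖y - x‖ + ‖x - z‖ := norm_sub_le_norm_sub_add_norm_sub y x z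
    have h2 : ‖y - x‖ = ‖x - y‖ := norm_sub_rev y x
    linarith
  · refine le_max_of_le_left ?_
    push_neg at hxz
    obtain ⟨v, hv1, hveq⟩ := exists_unitBall_opNorm_le (x - z)
    have key : (μ {y | (1 / 2) * ‖x - y‖ < ε}).toReal ≤ (μ {y | τ < ‖y v - z v‖}).toReal := by
      refine ENNReal.toReal_mono (measure_ne_top μ _) (measure_mono fun y hy => ?_)
      simp only [Set.mem_setOf_eq] at hy ⊢
      have h1 : ‖(x - y) v‖ ≤ ‖x - y‖ := by
        calc ‖(x - y) v‖ ≤ ‖x - y‖ * ‖v‖ := (x - y).le_opNorm v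
        _ ≤ ‖x - y‖ * 1 := mul_le_mul_of_nonneg_left hv1 (norm_nonneg _)
        _ = ‖x - y‖ := mul_one _
      have h2 : ‖(x - z) v‖ ≤ ‖(x - y) v‖ + ‖y v - z v‖ := by
        have : (x - z) v = (x - y) v + (y v - z v) := by
          simp [ContinuousLinearMap.sub_apply]
        rw [this]
        exact norm_add_le _ _
      have h3 : 2 * ε + τ ≤ ‖(x - z) v‖ := le_trans (by linarith) hveq
      linarith
    refine le_trans key ?_
    have hb : ∀ w : V, (⨆ _ : w ∈ Metric.closedBall (0 : V) 1,
        (μ {y | τ < ‖y w - z w‖}).toReal) ≤ 1 := by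
      intro w
      refine Real.iSup_le (fun _ => ?_) zero_le_one
      have h := ENNReal.toReal_mono ENNReal.one_ne_top (prob_le_one (μ := μ) (s := {y | τ < ‖y w - z w‖}))
      simpa using h
    have hmem : v ∈ Metric.closedBall (0 : V) 1 := by simpa using hv1
    calc (μ {y | τ < ‖y v - z v‖}).toReal
        = ⨆ _ : v ∈ Metric.closedBall (0 : V) 1, (μ {y | τ < ‖y v - z v‖}).toReal := by
          rw [ciSup_pos hmem]
      _ ≤ ⨆ w ∈ Metric.closedBall (0 : V) 1, (μ {y | τ < ‖y w - z w‖}).toReal :=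
          le_ciSup ⟨1, Set.forall_mem_range.mpr hb⟩ v
end

section
/- Let Θ be a set, 𝓛 a set of functions l: Θ → [0,1], μ a probability measure on 𝓛, and for each l let Z(l) ⊆ Θ be its solution set. Suppose a deterministic algorithm, making q queries, each answered by a value within τ of l(θ) at a queried point θ, outputs a correct solution for a μ-fraction β of loss functions l. Then for every reference function g: Θ → [0,1]: q ≥ (β − sup_{θ∈Θ} Pr_{l∼μ}[θ ∈ Z(l)]) / (sup_{θ∈Θ} Pr_{l∼μ}[|l(θ) − g(θ)| > τ]). Abstractly: given a finite sequence of query points x₁,…,x_q and an output t determined by g-consistent answers, any l in the success set with t ∉ Z(l) must satisfy |l(x_i) − g(x_i)| > τ for some i; hence β − sup_t μ(Z_t) ≤ q · sup_x Pr_{l∼μ}[|l(x) − g(x)| > τ]. -/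
open MeasureTheory

/-- Deterministic average-case lower bound for parametrized (loss-function) learning,
combinatorial core: if a deterministic algorithm making `q` τ-accurate queries
succeeds on a set `S` of loss functions of measure at least `β`, where the query
points `x₁,…,x_q` and the output `t` are those generated by answering every query
according to `g`, and every `l ∈ S` with `t ∉ Z(l)` is τ-distinguished from `g` at
some query point, then
`β − sup_{t'} Pr_{l∼μ}[t' ∈ Z(l)] ≤ q · sup_θ Pr_{l∼μ}[|l(θ) − g(θ)| > τ]`. -/
theorem loss_learning_lower_bound {Θ : Type*}
    (μ : Measure (Θ → ℝ)) [IsProbabilityMeasure μ]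
    (hrange : ∀ᵐ l ∂μ, ∀ θ, l θ ∈ Set.Icc (0 : ℝ) 1)
    (Z : (Θ → ℝ) → Set Θ) (g : Θ → ℝ) (τ β : ℝ) (hτ : 0 < τ)
    (q : ℕ) (x : Fin q → Θ) (t : Θ)
    (S : Set (Θ → ℝ)) (hβ : β ≤ (μ S).toReal)
    (hdist : ∀ l ∈ S, t ∉ Z l → ∃ i : Fin q, τ < |l (x i) - g (x i)|) :
    β - ⨆ t' : Θ, (μ {l | t' ∈ Z l}).toReal ≤
      (q : ℝ) * ⨆ θ : Θ, (μ {l | τ < |l θ - g θ|}).toReal := by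
  have hsub : S ⊆ {l | t ∈ Z l} ∪ ⋃ i, {l | τ < |l (x i) - g (x i)|} := by
    intro l hl
    by_cases h : t ∈ Z l
    · exact Or.inl h
    · obtain ⟨i, hi⟩ := hdist l hl h
      exact Or.inr (Set.mem_iUnion.2 ⟨i, hi⟩)
  have hfin : ∀ A : Set (Θ → ℝ), μ A ≠ ⊤ := fun A => (measure_lt_top μ A).ne
  have hle1 : ∀ A : Set (Θ → ℝ), (μ A).toReal ≤ 1 := by
    intro A
    have := prob_le_one (μ := μ) (s := A)
    simpa using ENNReal.toReal_mono (by simp) this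
  have h1 : (μ S).toReal ≤ (μ {l | t ∈ Z l}).toReal
      + ∑ i, (μ {l | τ < |l (x i) - g (x i)|}).toReal := by
    have hμ : μ S ≤ μ {l | t ∈ Z l} + ∑ i, μ {l | τ < |l (x i) - g (x i)|} := by
      refine (measure_mono hsub).trans ((measure_union_le _ _).trans ?_)
      gcongr
      exact measure_iUnion_fintype_le _ _
    have := ENNReal.toReal_mono (by
      refine ENNReal.add_ne_top.2 ⟨hfin _, ?_⟩
      exact (ENNReal.sum_lt_top.2 fun i _ => (measure_lt_top μ _)).ne) hμ
    rwa [ENNReal.toReal_add (hfin _)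
      ((ENNReal.sum_lt_top.2 fun i _ => (measure_lt_top μ _)).ne),
      ENNReal.toReal_sum (fun i _ => hfin _)] at this
  have hbdd1 : BddAbove (Set.range fun t' : Θ => (μ {l | t' ∈ Z l}).toReal) :=
    ⟨1, by rintro _ ⟨t', rfl⟩; exact hle1 _⟩
  have hbdd2 : BddAbove (Set.range fun θ : Θ => (μ {l | τ < |l θ - g θ|}).toReal) :=
    ⟨1, by rintro _ ⟨θ, rfl⟩; exact hle1 _⟩
  have h2 : (μ {l | t ∈ Z l}).toReal ≤ ⨆ t' : Θ, (μ {l | t' ∈ Z l}).toReal :=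
    le_ciSup hbdd1 t
  have h3 : ∑ i, (μ {l | τ < |l (x i) - g (x i)|}).toReal ≤
      (q : ℝ) * ⨆ θ : Θ, (μ {l | τ < |l θ - g θ|}).toReal := by
    calc ∑ i, (μ {l | τ < |l (x i) - g (x i)|}).toReal
        ≤ ∑ _i : Fin q, ⨆ θ : Θ, (μ {l | τ < |l θ - g θ|}).toReal :=
          Finset.sum_le_sum fun i _ => le_ciSup hbdd2 (x i)
      _ = (q : ℝ) * ⨆ θ : Θ, (μ {l | τ < |l θ - g θ|}).toReal := by
          simp [Finset.sum_const, nsmul_eq_mul]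
  linarith [hβ.trans h1]
end
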